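/- Let l₂ ≥ l₁ ≥ 0 be natural numbers. Let α : ℂ[x₁,…,x₅] → ℂ[y₁^{±1}, y₂^{±1}] be the ℂ-algebra homomorphism determined by α(x₁) = y₁y₂^{−l₁}, α(x₂) = y₁y₂^{−l₂}, α(x₃) = y₁, α(x₄) = y₂, α(x₅) = y₂. Then the kernel of α equals the ideal generated by the three binomials x₁ − x₂x₅^{l₂−l₁}, x₂x₅^{l₂} − x₃, and x₄ − x₅. -/

import Mathlib

open MvPolynomial

/-- The Laurent monomial `y₁^{v 0} y₂^{v 1}` in the Laurent polynomial ring
`ℂ[y₁^{±1}, y₂^{±1}]`, realized as `AddMonoidAlgebra ℂ (Fin 2 → ℤ)`. -/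
noncomputable def laurentMonomial2 (v : Fin 2 → ℤ) : AddMonoidAlgebra ℂ (Fin 2 → ℤ) :=
  AddMonoidAlgebra.single v 1

lemma lm_mul (v w : Fin 2 → ℤ) :
    laurentMonomial2 v * laurentMonomial2 w = laurentMonomial2 (v + w) := by
  simp [laurentMonomial2, AddMonoidAlgebra.single_mul_single]

lemma lm_pow (v : Fin 2 → ℤ) (n : ℕ) :
    laurentMonomial2 v ^ n = laurentMonomial2 (n • v) := by
  simp [laurentMonomial2, AddMonoidAlgebra.single_pow]

/-- The additive exponent map `(Fin 2 →₀ ℕ) →+ (Fin 2 → ℤ)` sending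
`d ↦ (d 0, -l₂ d 0 + d 1)`. -/
def expMap (l₂ : ℕ) : (Fin 2 →₀ ℕ) →+ (Fin 2 → ℤ) where
  toFun d := ![(d 0 : ℤ), -(l₂ : ℤ) * d 0 + d 1]
  map_zero' := by
    funext i
    fin_cases i <;> simp
  map_add' d e := by
    funext i
    fin_cases i <;> simp <;> push_cast <;> ring

lemma expMap_injective (l₂ : ℕ) : Function.Injective (expMap l₂) := by
  intro d e hde
  have h0 : (d 0 : ℤ) = e 0 := by
    have := congrFun hde 0
    simpa [expMap] using this
  have h0' : d 0 = e 0 := by exact_mod_cast h0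
  have h1 : d 1 = e 1 := by
    have := congrFun hde 1
    simp only [expMap, AddMonoidHom.coe_mk, ZeroHom.coe_mk, Matrix.cons_val_one,
      Matrix.head_cons] at this
    rw [h0] at this
    have : (d 1 : ℤ) = e 1 := by simp only [Matrix.cons_val_zero] at this; linarith
    exact_mod_cast this
  ext i
  fin_cases i
  · exact h0'
  · exact h1

theorem toric_ideal_case_2_0_2 (l₁ l₂ : ℕ) (h : l₁ ≤ l₂) :
    RingHom.ker (MvPolynomial.aeval
        ![laurentMonomial2 ![1, -(l₁ : ℤ)], laurentMonomial2 ![1, -(l₂ : ℤ)],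
          laurentMonomial2 ![1, 0], laurentMonomial2 ![0, 1], laurentMonomial2 ![0, 1]] :
      MvPolynomial (Fin 5) ℂ →ₐ[ℂ] AddMonoidAlgebra ℂ (Fin 2 → ℤ)) =
    Ideal.span {(X 0 - X 1 * X 4 ^ (l₂ - l₁) : MvPolynomial (Fin 5) ℂ),
      X 1 * X 4 ^ l₂ - X 2, X 3 - X 4} := by
  set α : MvPolynomial (Fin 5) ℂ →ₐ[ℂ] AddMonoidAlgebra ℂ (Fin 2 → ℤ) :=
    MvPolynomial.aeval
        ![laurentMonomial2 ![1, -(l₁ : ℤ)], laurentMonomial2 ![1, -(l₂ : ℤ)],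
          laurentMonomial2 ![1, 0], laurentMonomial2 ![0, 1], laurentMonomial2 ![0, 1]] with hα
  set I : Ideal (MvPolynomial (Fin 5) ℂ) :=
    Ideal.span {(X 0 - X 1 * X 4 ^ (l₂ - l₁) : MvPolynomial (Fin 5) ℂ),
      X 1 * X 4 ^ l₂ - X 2, X 3 - X 4} with hI
  have g1 : (X 0 - X 1 * X 4 ^ (l₂ - l₁) : MvPolynomial (Fin 5) ℂ) ∈ I :=
    Ideal.subset_span (by simp)
  have g2 : (X 1 * X 4 ^ l₂ - X 2 : MvPolynomial (Fin 5) ℂ) ∈ I :=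
    Ideal.subset_span (by simp)
  have g3 : (X 3 - X 4 : MvPolynomial (Fin 5) ℂ) ∈ I :=
    Ideal.subset_span (by simp)
  -- exponent vector identities
  have hv1 : (![1, -(l₂ : ℤ)] + (l₂ - l₁) • ![0, 1] : Fin 2 → ℤ) = ![1, -(l₁ : ℤ)] := by
    funext i
    fin_cases i <;> simp
    omega
  have e1 : (-(l₂ : ℤ) + ((l₂ - l₁ : ℕ) : ℤ)) = -(l₁ : ℤ) := by omega
  have e2 : (-(l₂ : ℤ) + (l₂ : ℤ)) = 0 := by omega
  have hv2 : (![1, -(l₂ : ℤ)] + l₂ • ![0, 1] : Fin 2 → ℤ) = ![1, 0] := by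
    funext i
    fin_cases i <;> simp
  apply le_antisymm
  · -- hard direction
    intro p hp
    rw [RingHom.mem_ker] at hp
    -- the substitution map into two variables
    set ψ : MvPolynomial (Fin 5) ℂ →ₐ[ℂ] MvPolynomial (Fin 2) ℂ :=
      MvPolynomial.aeval ![X 0 * X 1 ^ (l₂ - l₁), X 0, X 0 * X 1 ^ l₂, X 1, X 1] with hψ
    set ι : MvPolynomial (Fin 2) ℂ →ₐ[ℂ] MvPolynomial (Fin 5) ℂ :=
      MvPolynomial.aeval ![X 1, X 4] with hι
    set β : MvPolynomial (Fin 2) ℂ →ₐ[ℂ] AddMonoidAlgebra ℂ (Fin 2 → ℤ) :=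
      AddMonoidAlgebra.mapDomainAlgHom ℂ ℂ (expMap l₂) with hβ
    have hβX : ∀ i : Fin 2, β (X i) = laurentMonomial2 (expMap l₂ (Finsupp.single i 1)) := by
      intro i
      show AddMonoidAlgebra.mapDomain _ _ = _
      rw [MvPolynomial.X, MvPolynomial.monomial]
      erw [AddMonoidAlgebra.mapDomain_single]
      rfl
    have hβ0 : β (X 0) = laurentMonomial2 ![1, -(l₂ : ℤ)] := by
      rw [hβX 0]
      congr 1
      funext i
      fin_cases i <;> simp [expMap]
    have hβ1 : β (X 1) = laurentMonomial2 ![0, 1] := by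
      rw [hβX 1]
      congr 1
      funext i
      fin_cases i <;> simp [expMap]
    -- β ∘ ψ = α
    have hcomp : β.comp ψ = α := by
      apply MvPolynomial.algHom_ext
      intro i
      fin_cases i <;>
        simp [hψ, hα, map_mul, map_pow, hβ0, hβ1, lm_pow, lm_mul, hv1, hv2, e1, e2]
    -- p ≡ ι (ψ p) mod I
    have key : ∀ q : MvPolynomial (Fin 5) ℂ, q - ι (ψ q) ∈ I := by
      intro q
      have hq : (Ideal.Quotient.mkₐ ℂ I).comp (ι.comp ψ) = Ideal.Quotient.mkₐ ℂ I := by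
        apply MvPolynomial.algHom_ext
        intro i
        simp only [AlgHom.comp_apply, Ideal.Quotient.mkₐ_eq_mk]
        rw [Ideal.Quotient.eq]
        have g1' : (X 1 * X 4 ^ (l₂ - l₁) - X 0 : MvPolynomial (Fin 5) ℂ) ∈ I := by
          have := I.neg_mem g1; simpa using this
        have g3' : (X 4 - X 3 : MvPolynomial (Fin 5) ℂ) ∈ I := by
          have := I.neg_mem g3; simpa using this
        fin_cases i <;>
          simp [hψ, hι, map_mul, map_pow]
        · exact g1'
        · exact g2
        · exact g3'
      have := congrArg (fun f => f q) hq.symm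
      simp only [AlgHom.comp_apply, Ideal.Quotient.mkₐ_eq_mk] at this
      rwa [Ideal.Quotient.eq] at this
    -- β injective
    have hβinj : Function.Injective β := by
      intro a b hab
      have : AddMonoidAlgebra.mapDomain (expMap l₂) a = AddMonoidAlgebra.mapDomain (expMap l₂) b := hab
      exact AddMonoidAlgebra.mapDomain_injective (expMap_injective l₂) this
    have hψp : ψ p = 0 := by
      apply hβinj
      rw [map_zero]
      have : β (ψ p) = α p := by rw [← hcomp]; rfl
      rw [this, hp]
    have := key p
    rwa [hψp, map_zero, sub_zero] at this
  · -- easy direction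
    rw [Ideal.span_le]
    intro q hq
    simp only [Set.mem_insert_iff, Set.mem_singleton_iff] at hq
    have mem_ker : ∀ r : MvPolynomial (Fin 5) ℂ, α r = 0 → r ∈ RingHom.ker α.toRingHom := by
      intro r hr
      rwa [RingHom.mem_ker]
    rcases hq with rfl | rfl | rfl <;> apply mem_ker <;>
      simp [map_sub, map_mul, map_pow, hα, lm_pow, lm_mul, hv1, hv2, e1, e2]
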